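/- Let (X,d,μ) be a Borel metric measure space in which every closed ball has positive finite measure, fix r > 0, and suppose X is s-doubling and has the Vitali covering property for every s ≥ r. Let 1 < p ≤ ∞ and 1 ≤ q ≤ ∞. Then there exists a constant c ≥ 2 such that for every f ∈ L^{p,q}(X), ‖A_r f‖_{p,q} ≤ (cp/(p−1)) ‖f‖_{p,q}, and likewise ‖A_r f‖_{(p,q)} ≤ (cp/(p−1)) ‖f‖_{(p,q)}; in particular A_r maps L^{p,q}(X) into L^{p,q}(X). -/

import Mathlib

open MeasureTheory Metric Filter Set

/-- The averaging operator `A_r f(x) = (1/μ(B(x,r))) ∫_{B(x,r)} f dμ`. -/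
noncomputable def avgOp {X : Type*} [MeasurableSpace X] [PseudoMetricSpace X]
    (μ : Measure X) (r : ℝ) (f : X → ℝ) (x : X) : ℝ :=
  (μ (closedBall x r)).toReal⁻¹ * ∫ y in closedBall x r, f y ∂μ

/-- `X` is `s`-doubling: there is `γ ≥ 1` with `μ(B(x,2s)) ≤ γ μ(B(x,s))` for all `x`. -/
def DoublingAt {X : Type*} [PseudoMetricSpace X] [MeasurableSpace X]
    (μ : MeasureTheory.Measure X) (s : ℝ) : Prop :=
  ∃ γ : ℝ, 1 ≤ γ ∧ ∀ x : X,
    μ (closedBall x (2 * s)) ≤ ENNReal.ofReal γ * μ (closedBall x s)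

/-- `X` has the Vitali covering property: for every `A ⊆ X` and every family `𝓑` of
closed balls (coded as center–radius pairs) centered in `A`, with positive radii that
are uniformly bounded, such that every `x ∈ A` is the center of balls of `𝓑` of
arbitrarily small radius, there is a countable pairwise disjoint subfamily `𝓑' ⊆ 𝓑`
with `μ(A \ ⋃ 𝓑') = 0`. -/
def VitaliCoveringProperty (X : Type*) [PseudoMetricSpace X] [MeasurableSpace X]
    (μ : MeasureTheory.Measure X) : Prop :=
  ∀ (A : Set X) (ℬ : Set (X × ℝ)),
    (∀ b ∈ ℬ, b.1 ∈ A ∧ 0 < b.2) →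
    (∃ R : ℝ, ∀ b ∈ ℬ, b.2 ≤ R) →
    (∀ x ∈ A, ∀ ε > 0, ∃ s : ℝ, 0 < s ∧ s ≤ ε ∧ (x, s) ∈ ℬ) →
    ∃ ℬ' ⊆ ℬ, ℬ'.Countable ∧
      (ℬ'.Pairwise fun b b' => Disjoint (closedBall b.1 b.2) (closedBall b'.1 b'.2)) ∧
      μ (A \ ⋃ b ∈ ℬ', closedBall b.1 b.2) = 0

/-- The distribution function `μ_f(t) = μ({x : |f(x)| > t})` of a function `f`. -/
noncomputable def distribFn {X : Type*} [MeasurableSpace X]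
    (μ : MeasureTheory.Measure X) (f : X → ℝ) (t : ℝ) : ENNReal :=
  μ {x : X | t < |f x|}

/-- The decreasing rearrangement `f*(t) = inf{s ≥ 0 : μ_f(s) ≤ t}` of `f`
(with values in `[0,∞]`). -/
noncomputable def rearr {X : Type*} [MeasurableSpace X]
    (μ : MeasureTheory.Measure X) (f : X → ℝ) (t : ℝ) : ENNReal :=
  sInf {s : ENNReal | μ {x : X | s < ENNReal.ofReal |f x|} ≤ ENNReal.ofReal t}

/-- The maximal rearrangement `f**(t) = (1/t) ∫_0^t f*(s) ds`. -/
noncomputable def rearr2 {X : Type*} [MeasurableSpace X]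
    (μ : MeasureTheory.Measure X) (f : X → ℝ) (t : ℝ) : ENNReal :=
  (ENNReal.ofReal t)⁻¹ * ∫⁻ s in Set.Ioc (0 : ℝ) t, rearr μ f s

/-- The Lorentz norm `‖f‖_{p,q}`, for `p, q ∈ [1,∞]`:
`(∫_0^∞ t^{q/p−1} f*(t)^q dt)^{1/q}` if `q < ∞`, and `sup_{t>0} t^{1/p} f*(t)` if
`q = ∞` (with the conventions `q/∞ = 0` and `1/∞ = 0` on the exponents). -/
noncomputable def lorentzNorm {X : Type*} [MeasurableSpace X]
    (μ : MeasureTheory.Measure X) (f : X → ℝ) (p q : ENNReal) : ENNReal :=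
  if q = ⊤ then ⨆ t ∈ Set.Ioi (0 : ℝ), ENNReal.ofReal (t ^ (1 / p.toReal)) * rearr μ f t
  else (∫⁻ t in Set.Ioi (0 : ℝ),
    ENNReal.ofReal (t ^ (q.toReal / p.toReal - 1)) * rearr μ f t ^ q.toReal) ^ (1 / q.toReal)

/-- The Lorentz norm `‖f‖_{(p,q)}`, defined as `‖f‖_{p,q}` with `f**` replacing `f*`. -/
noncomputable def lorentzNorm' {X : Type*} [MeasurableSpace X]
    (μ : MeasureTheory.Measure X) (f : X → ℝ) (p q : ENNReal) : ENNReal :=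
  if q = ⊤ then ⨆ t ∈ Set.Ioi (0 : ℝ), ENNReal.ofReal (t ^ (1 / p.toReal)) * rearr2 μ f t
  else (∫⁻ t in Set.Ioi (0 : ℝ),
    ENNReal.ofReal (t ^ (q.toReal / p.toReal - 1)) * rearr2 μ f t ^ q.toReal) ^ (1 / q.toReal)
namespace S9
open ENNReal

variable {X : Type*} [MeasurableSpace X] (μ : MeasureTheory.Measure X)

lemma rearr_antitone (f : X → ℝ) : Antitone (rearr μ f) := fun a b hab =>
  sInf_le_sInf (fun s hs => le_trans hs (ENNReal.ofReal_le_ofReal hab))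

lemma rearr_measurable (f : X → ℝ) : Measurable (rearr μ f) :=
  (rearr_antitone μ f).measurable

lemma distrib_le_of_rearr_lt {f : X → ℝ} {t : ℝ} {u : ℝ≥0∞} (h : rearr μ f t < u) :
    μ {x | u < ENNReal.ofReal |f x|} ≤ ENNReal.ofReal t := by
  obtain ⟨v, hv, hvu⟩ := sInf_lt_iff.mp h
  exact le_trans (measure_mono (fun x hx => lt_trans hvu hx)) hv

lemma rearr_le_of_distrib_le {f : X → ℝ} {t : ℝ} {u : ℝ≥0∞}
    (h : μ {x | u < ENNReal.ofReal |f x|} ≤ ENNReal.ofReal t) : rearr μ f t ≤ u :=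
  sInf_le h

/-- The averaging `h ↦ (1/t) ∫_0^t h`. -/
noncomputable def avg (h : ℝ → ℝ≥0∞) (t : ℝ) : ℝ≥0∞ :=
  (ENNReal.ofReal t)⁻¹ * ∫⁻ s in Set.Ioc (0 : ℝ) t, h s

lemma rearr2_eq_avg (f : X → ℝ) : rearr2 μ f = avg (rearr μ f) := rfl

/-- `h` antitone on positive reals. -/
def AntiOn (h : ℝ → ℝ≥0∞) : Prop := ∀ ⦃a b : ℝ⦄, 0 < a → a ≤ b → h b ≤ h a

lemma rearr_antiOn (f : X → ℝ) : AntiOn (rearr μ f) := fun _ _ _ hab =>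
  rearr_antitone μ f hab

lemma mul_le_lint {h : ℝ → ℝ≥0∞} (hh : AntiOn h) {t : ℝ} (ht : 0 < t) :
    h t * ENNReal.ofReal t ≤ ∫⁻ s in Set.Ioc (0 : ℝ) t, h s := by
  calc h t * ENNReal.ofReal t = ∫⁻ _ in Set.Ioc (0 : ℝ) t, h t := by
        rw [MeasureTheory.setLIntegral_const, Real.volume_Ioc, sub_zero]
    _ ≤ ∫⁻ s in Set.Ioc (0 : ℝ) t, h s :=
        MeasureTheory.setLIntegral_mono' measurableSet_Ioc (fun x hx => hh hx.1 hx.2)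

lemma le_avg {h : ℝ → ℝ≥0∞} (hh : AntiOn h) {t : ℝ} (ht : 0 < t) : h t ≤ avg h t := by
  have h0 : ENNReal.ofReal t ≠ 0 := by simp [ht]
  have htop : ENNReal.ofReal t ≠ ⊤ := ENNReal.ofReal_ne_top
  calc h t = (ENNReal.ofReal t)⁻¹ * (h t * ENNReal.ofReal t) := by
        rw [mul_comm (h t), ← mul_assoc, ENNReal.inv_mul_cancel h0 htop, one_mul]
    _ ≤ avg h t := by
        exact mul_le_mul_right (mul_le_lint hh ht) _

lemma avg_antiOn {h : ℝ → ℝ≥0∞} (hh : AntiOn h) : AntiOn (avg h) := by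
  intro t₁ t₂ ht₁ h12
  have ht₂ : 0 < t₂ := lt_of_lt_of_le ht₁ h12
  have h10 : ENNReal.ofReal t₁ ≠ 0 := by simp [ht₁]
  have h1top : ENNReal.ofReal t₁ ≠ ⊤ := ENNReal.ofReal_ne_top
  set A := ∫⁻ s in Set.Ioc (0 : ℝ) t₁, h s with hA
  have hsplit : ∫⁻ s in Set.Ioc (0 : ℝ) t₂, h s ≤ A + ENNReal.ofReal (t₂ - t₁) * h t₁ := by
    rw [← Set.Ioc_union_Ioc_eq_Ioc (le_of_lt ht₁) h12,
      MeasureTheory.lintegral_union measurableSet_Ioc (Set.Ioc_disjoint_Ioc_of_le le_rfl)]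
    refine add_le_add_right ?_ A
    calc ∫⁻ s in Set.Ioc t₁ t₂, h s ≤ ∫⁻ _ in Set.Ioc t₁ t₂, h t₁ :=
          MeasureTheory.setLIntegral_mono' measurableSet_Ioc
            (fun x hx => hh ht₁ (le_of_lt hx.1))
      _ = ENNReal.ofReal (t₂ - t₁) * h t₁ := by
          rw [MeasureTheory.setLIntegral_const, Real.volume_Ioc, mul_comm]
  have hcore : h t₁ ≤ (ENNReal.ofReal t₁)⁻¹ * A := by
    have := le_avg hh ht₁
    exact this
  calc avg h t₂ ≤ (ENNReal.ofReal t₂)⁻¹ * (A + ENNReal.ofReal (t₂ - t₁) *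
        ((ENNReal.ofReal t₁)⁻¹ * A)) :=
        mul_le_mul_right (le_trans hsplit (add_le_add_right (mul_le_mul_right hcore _) A)) _
    _ = (ENNReal.ofReal t₂)⁻¹ * ((1 + ENNReal.ofReal (t₂ - t₁) * (ENNReal.ofReal t₁)⁻¹) * A) := by
        ring_nf
    _ ≤ (ENNReal.ofReal t₁)⁻¹ * A := by
        rw [← mul_assoc]
        refine mul_le_mul_left ?_ A
        have e1 : ENNReal.ofReal (t₂ - t₁) * (ENNReal.ofReal t₁)⁻¹
            = ENNReal.ofReal ((t₂ - t₁) / t₁) := by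
          rw [ENNReal.ofReal_div_of_pos ht₁, ENNReal.div_eq_inv_mul, mul_comm]
        have e2 : (1 : ℝ≥0∞) + ENNReal.ofReal ((t₂ - t₁) / t₁) = ENNReal.ofReal (t₂ / t₁) := by
          rw [← ENNReal.ofReal_one, ← ENNReal.ofReal_add (by norm_num)
            (div_nonneg (by linarith) ht₁.le)]
          congr 1
          field_simp
          ring
        rw [e1, e2, ENNReal.ofReal_div_of_pos ht₁]
        rw [ENNReal.div_eq_inv_mul, ← mul_assoc, mul_comm ((ENNReal.ofReal t₂)⁻¹),
          mul_assoc]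
        rw [ENNReal.inv_mul_cancel (by simp [ht₂]) ENNReal.ofReal_ne_top, mul_one]

end S9
namespace S9
open ENNReal

lemma covering {X : Type*} [MetricSpace X] [MeasurableSpace X] [BorelSpace X]
    (μ ν : MeasureTheory.Measure X) [MeasureTheory.IsFiniteMeasure ν] {r γ : ℝ} (hr : 0 < r)
    (hball : ∀ x : X, 0 < μ (Metric.closedBall x r) ∧ μ (Metric.closedBall x r) < ⊤)
    (hγ : ∀ x : X, μ (Metric.closedBall x (2*r)) ≤
      ENNReal.ofReal γ * μ (Metric.closedBall x r))
    {β : ℝ≥0∞} (hβ0 : β ≠ 0) (hβtop : β ≠ ⊤) :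
    μ {x | β < (μ (Metric.closedBall x r))⁻¹ * ν (Metric.closedBall x r)}
      ≤ ENNReal.ofReal γ * β⁻¹ * ν Set.univ := by
  classical
  set E := {x | β < (μ (Metric.closedBall x r))⁻¹ * ν (Metric.closedBall x r)} with hE
  set S : Set (Set X) := {D | D ⊆ E ∧ D.Pairwise (fun y z => 2*r < dist y z)} with hS
  obtain ⟨M, -, hM⟩ := zorn_subset_nonempty S (fun c hcS hchain _ => by
      refine ⟨⋃₀ c, ⟨fun x hx => ?_, fun y hy z hz hyz => ?_⟩, fun s hs => Set.subset_sUnion_of_mem hs⟩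
      · obtain ⟨D, hD, hxD⟩ := hx
        exact (hcS hD).1 hxD
      · obtain ⟨D₁, hD₁, hy₁⟩ := hy
        obtain ⟨D₂, hD₂, hz₂⟩ := hz
        rcases hchain.total hD₁ hD₂ with h | h
        · exact (hcS hD₂).2 (h hy₁) hz₂ hyz
        · exact (hcS hD₁).2 hy₁ (h hz₂) hyz) ∅ ⟨Set.empty_subset _, Set.pairwise_empty _⟩
  have hME : M ⊆ E := hM.prop.1
  have hMsep : M.Pairwise (fun y z => 2*r < dist y z) := hM.prop.2
  -- every point of E is within 2r of a point of M
  have hcover : E ⊆ ⋃ y ∈ M, Metric.closedBall y (2*r) := by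
    intro x hx
    by_contra hnot
    simp only [Set.mem_iUnion, Metric.mem_closedBall, not_exists, not_le] at hnot
    have hxM : x ∉ M := fun hxM => absurd (hnot x hxM) (by simp [dist_self]; positivity)
    have hins : insert x M ∈ S := by
      constructor
      · exact Set.insert_subset hx hME
      · refine (haveI : Std.Symm (fun y z : X => 2*r < dist y z) := ⟨fun a b hab => by rw [dist_comm]; exact hab⟩; Set.pairwise_insert_of_symm) |>.mpr ⟨hMsep, fun z hz _ => ?_⟩
        · exact hnot z hz
    exact hxM (hM.2 hins (Set.subset_insert x M) (Set.mem_insert x M))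
  -- disjointness of the r-balls
  have hdisj : M.Pairwise (fun y z =>
      Disjoint (Metric.closedBall y r) (Metric.closedBall z r)) := by
    intro y hy z hz hyz
    apply Metric.closedBall_disjoint_closedBall
    have := hMsep hy hz hyz
    linarith
  -- positivity of ν on the r-balls centered in E
  have hνpos : ∀ y ∈ M, 0 < ν (Metric.closedBall y r) := by
    intro y hy
    by_contra hc
    push_neg at hc
    have h0 : ν (Metric.closedBall y r) = 0 := le_antisymm hc (zero_le)
    have := hME hy
    rw [hE, Set.mem_setOf_eq, h0, mul_zero] at this
    exact absurd this (by simp)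
  -- countability of M
  have hMcount : M.Countable := by
    have := MeasureTheory.Measure.countable_meas_pos_of_disjoint_iUnion
      (μ := ν) (As := fun y : M => Metric.closedBall (y : X) r)
      (fun y => Metric.isClosed_closedBall.measurableSet)
      (fun y z hyz => hdisj y.2 z.2 (Subtype.coe_ne_coe.mpr hyz))
    have huniv : {i : M | 0 < ν (Metric.closedBall (i : X) r)} = Set.univ := by
      ext y; simp [hνpos y y.2]
    rw [huniv] at this
    have : Countable M := Set.countable_univ_iff.mp this
    exact Set.countable_coe_iff.mp this
  -- per-ball bound
  have hball_le : ∀ y ∈ M, μ (Metric.closedBall y r) ≤ β⁻¹ * ν (Metric.closedBall y r) := by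
    intro y hy
    have h1 : β < (μ (Metric.closedBall y r))⁻¹ * ν (Metric.closedBall y r) := hME hy
    have h2 : μ (Metric.closedBall y r) * β ≤ ν (Metric.closedBall y r) := by
      calc μ (Metric.closedBall y r) * β
          ≤ μ (Metric.closedBall y r) * ((μ (Metric.closedBall y r))⁻¹ *
            ν (Metric.closedBall y r)) := mul_le_mul_right h1.le _
        _ = ν (Metric.closedBall y r) := by
            rw [← mul_assoc, ENNReal.mul_inv_cancel (hball y).1.ne' (hball y).2.ne, one_mul]
    calc μ (Metric.closedBall y r)
        = μ (Metric.closedBall y r) * β * β⁻¹ := by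
          rw [mul_assoc, ENNReal.mul_inv_cancel hβ0 hβtop, mul_one]
      _ ≤ ν (Metric.closedBall y r) * β⁻¹ := mul_le_mul_left h2 _
      _ = β⁻¹ * ν (Metric.closedBall y r) := mul_comm _ _
  -- sum up
  calc μ E ≤ μ (⋃ y ∈ M, Metric.closedBall y (2*r)) := MeasureTheory.measure_mono hcover
    _ ≤ ∑' y : M, μ (Metric.closedBall (y : X) (2*r)) :=
        MeasureTheory.measure_biUnion_le μ hMcount _
    _ ≤ ∑' y : M, ENNReal.ofReal γ * β⁻¹ * ν (Metric.closedBall (y : X) r) := by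
        refine ENNReal.tsum_le_tsum (fun y => ?_)
        calc μ (Metric.closedBall (y : X) (2*r))
            ≤ ENNReal.ofReal γ * μ (Metric.closedBall (y : X) r) := hγ y
          _ ≤ ENNReal.ofReal γ * (β⁻¹ * ν (Metric.closedBall (y : X) r)) :=
              mul_le_mul_right (hball_le y y.2) _
          _ = ENNReal.ofReal γ * β⁻¹ * ν (Metric.closedBall (y : X) r) := by rw [mul_assoc]
    _ = ENNReal.ofReal γ * β⁻¹ * ∑' y : M, ν (Metric.closedBall (y : X) r) := by
        rw [ENNReal.tsum_mul_left]
    _ ≤ ENNReal.ofReal γ * β⁻¹ * ν Set.univ := by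
        refine mul_le_mul_right ?_ _
        rw [← MeasureTheory.measure_biUnion hMcount hdisj
          (fun y _ => Metric.isClosed_closedBall.measurableSet)]
        exact MeasureTheory.measure_mono (Set.subset_univ _)

end S9
namespace S9
open ENNReal MeasureTheory

variable {X : Type*} [MeasurableSpace X] (μ : MeasureTheory.Measure X)

lemma vol_slice_le {c K : ℝ≥0∞} :
    (volume : Measure ℝ) ({u : ℝ | c + ENNReal.ofReal u ≤ K} ∩ Set.Ioi 0) ≤ K := by
  rcases eq_or_ne K ⊤ with hK | hK
  · simp [hK]
  · calc (volume : Measure ℝ) ({u : ℝ | c + ENNReal.ofReal u ≤ K} ∩ Set.Ioi 0)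
        ≤ volume (Set.Ioc (0:ℝ) K.toReal) := by
          refine measure_mono (fun u hu => ⟨hu.2, ?_⟩)
          have h1 : ENNReal.ofReal u ≤ K := le_trans le_add_self hu.1
          have := ENNReal.toReal_mono hK h1
          rwa [ENNReal.toReal_ofReal (le_of_lt hu.2)] at this
      _ ≤ K := by
          rw [Real.volume_Ioc, sub_zero]
          exact ENNReal.ofReal_toReal_le

lemma swap_bound {c : ℝ≥0∞} {φ : ℝ → ℝ≥0∞} (hφ : Measurable φ) {s : ℝ} :
    ∫⁻ u in Set.Ioi (0:ℝ),
        (volume.restrict (Set.Ioc (0:ℝ) s)) {w | c + ENNReal.ofReal u ≤ φ w}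
      ≤ ∫⁻ w in Set.Ioc (0:ℝ) s, φ w := by
  set ν := volume.restrict (Set.Ioc (0:ℝ) s)
  set A : Set (ℝ × ℝ) := {q | c + ENNReal.ofReal q.1 ≤ φ q.2} with hA
  have hAmeas : MeasurableSet A :=
    measurableSet_le (measurable_const.add (ENNReal.measurable_ofReal.comp measurable_fst))
      (hφ.comp measurable_snd)
  have hGmeas : Measurable (fun q : ℝ × ℝ => A.indicator (1 : ℝ × ℝ → ℝ≥0∞) q) :=
    measurable_const.indicator hAmeas
  have hslice1 : ∀ u : ℝ, MeasurableSet {w : ℝ | c + ENNReal.ofReal u ≤ φ w} :=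
    fun u => measurableSet_le measurable_const hφ
  have hslice2 : ∀ w : ℝ, MeasurableSet {u : ℝ | c + ENNReal.ofReal u ≤ φ w} :=
    fun w => measurableSet_le (measurable_const.add ENNReal.measurable_ofReal) measurable_const
  calc ∫⁻ u in Set.Ioi (0:ℝ), ν {w | c + ENNReal.ofReal u ≤ φ w}
      = ∫⁻ u in Set.Ioi (0:ℝ), ∫⁻ w, A.indicator (1 : ℝ × ℝ → ℝ≥0∞) (u, w) ∂ν := by
        refine lintegral_congr (fun u => ?_)
        rw [← lintegral_indicator_one (hslice1 u)]
        refine lintegral_congr (fun w => ?_)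
        by_cases h : c + ENNReal.ofReal u ≤ φ w <;> simp [Set.indicator, hA, h]
    _ = ∫⁻ w, (∫⁻ u in Set.Ioi (0:ℝ), A.indicator (1 : ℝ × ℝ → ℝ≥0∞) (u, w)) ∂ν :=
        lintegral_lintegral_swap (f := fun u w => A.indicator (1 : ℝ × ℝ → ℝ≥0∞) (u, w))
          hGmeas.aemeasurable
    _ ≤ ∫⁻ w, φ w ∂ν := by
        refine lintegral_mono (fun w => ?_)
        have he : ∫⁻ u in Set.Ioi (0:ℝ), A.indicator (1 : ℝ × ℝ → ℝ≥0∞) (u, w)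
            = ∫⁻ u in Set.Ioi (0:ℝ), {u : ℝ | c + ENNReal.ofReal u ≤ φ w}.indicator
                (1 : ℝ → ℝ≥0∞) u := by
          refine lintegral_congr (fun u => ?_)
          by_cases h : c + ENNReal.ofReal u ≤ φ w <;> simp [Set.indicator, hA, h]
        rw [he, lintegral_indicator_one (hslice2 w), Measure.restrict_apply (hslice2 w)]
        exact vol_slice_le
    _ = ∫⁻ w in Set.Ioc (0:ℝ) s, φ w := rfl

lemma key_layercake {f : X → ℝ} (hf : Measurable f) {s : ℝ} (hs : 0 < s)
    (hτ : rearr μ f s ≠ ⊤) :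
    ∫⁻ x, ENNReal.ofReal (max (|f x| - (rearr μ f s).toReal) 0) ∂μ
      ≤ ∫⁻ w in Set.Ioc (0:ℝ) s, rearr μ f w := by
  set τ := rearr μ f s with hτdef
  set T := τ.toReal with hT
  have hT0 : 0 ≤ T := ENNReal.toReal_nonneg
  have hg : Measurable (fun x => max (|f x| - T) 0) :=
    (hf.abs.sub measurable_const).max measurable_const
  have hlc := lintegral_eq_lintegral_meas_lt (f := fun x => max (|f x| - T) 0) μ
    (Filter.Eventually.of_forall fun x => le_max_right _ _) hg.aemeasurable
  rw [hlc]
  set ν := volume.restrict (Set.Ioc (0:ℝ) s) with hν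
  calc ∫⁻ u in Set.Ioi (0:ℝ), μ {a | u < max (|f a| - T) 0}
      ≤ ∫⁻ u in Set.Ioi (0:ℝ), ν {w | τ + ENNReal.ofReal u ≤ rearr μ f w} := by
        refine setLIntegral_mono (Antitone.measurable (fun u₁ u₂ h12 => measure_mono
          (fun w hw => le_trans (add_le_add_right (ENNReal.ofReal_le_ofReal h12) τ) hw)))
          (fun u hu => ?_)
        have hu0 : (0:ℝ) < u := hu
        have hofim : τ + ENNReal.ofReal u = ENNReal.ofReal (T + u) := by
          rw [ENNReal.ofReal_add hT0 hu0.le, ENNReal.ofReal_toReal hτ]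
        -- step A : rewrite the distribution set
        have hsetA : {a : X | u < max (|f a| - T) 0}
            = {a : X | τ + ENNReal.ofReal u < ENNReal.ofReal |f a|} := by
          ext a
          simp only [Set.mem_setOf_eq, lt_max_iff, hofim,
            ENNReal.ofReal_lt_ofReal_iff_of_nonneg (by linarith : (0:ℝ) ≤ T + u)]
          constructor
          · rintro (h | h)
            · linarith
            · linarith
          · intro h; left; linarith
        rw [hsetA]
        -- step B : compare with the rearrangement superlevel set
        set m := μ {a : X | τ + ENNReal.ofReal u < ENNReal.ofReal |f a|} with hm
        have hlt : τ < τ + ENNReal.ofReal u :=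
          ENNReal.lt_add_right hτ (by simp [hu0])
        have hm_le : m ≤ ENNReal.ofReal s := distrib_le_of_rearr_lt μ hlt
        have hm_top : m ≠ ⊤ := (lt_of_le_of_lt hm_le ENNReal.ofReal_lt_top).ne
        have hsub : Set.Ioo (0:ℝ) m.toReal
            ⊆ {w | τ + ENNReal.ofReal u ≤ rearr μ f w} ∩ Set.Ioc 0 s := by
          intro w hw
          have hwm : ENNReal.ofReal w < m :=
            (ENNReal.ofReal_lt_iff_lt_toReal hw.1.le hm_top).mpr hw.2
          constructor
          · show τ + ENNReal.ofReal u ≤ sInf {s' : ℝ≥0∞ |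
              μ {x : X | s' < ENNReal.ofReal |f x|} ≤ ENNReal.ofReal w}
            refine le_sInf (fun v' hv' => ?_)
            by_contra hc
            push_neg at hc
            have hle : m ≤ ENNReal.ofReal w :=
              le_trans (measure_mono (fun a ha => lt_trans hc ha)) hv'
            exact absurd (lt_of_le_of_lt hle hwm) (lt_irrefl m)
          · refine ⟨hw.1, le_trans hw.2.le ?_⟩
            have := ENNReal.toReal_mono ENNReal.ofReal_ne_top hm_le
            rwa [ENNReal.toReal_ofReal hs.le] at this
        calc m = volume (Set.Ioo (0:ℝ) m.toReal) := by
              rw [Real.volume_Ioo, sub_zero, ENNReal.ofReal_toReal hm_top]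
          _ ≤ volume ({w | τ + ENNReal.ofReal u ≤ rearr μ f w} ∩ Set.Ioc 0 s) :=
              measure_mono hsub
          _ = ν {w | τ + ENNReal.ofReal u ≤ rearr μ f w} :=
              (Measure.restrict_apply' measurableSet_Ioc).symm
    _ ≤ ∫⁻ w in Set.Ioc (0:ℝ) s, rearr μ f w := swap_bound (rearr_measurable μ f)

end S9
namespace S9
open ENNReal MeasureTheory Metric

lemma pointwise_bound {X : Type*} [MetricSpace X] [MeasurableSpace X] [BorelSpace X]
    (μ : Measure X) {r : ℝ} (hr : 0 < r)
    (hball : ∀ (x : X) (s : ℝ), 0 < s → 0 < μ (closedBall x s) ∧ μ (closedBall x s) < ⊤)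
    {f : X → ℝ} (hf : Measurable f) {T : ℝ} (hT0 : 0 ≤ T) (x : X) :
    ENNReal.ofReal |avgOp μ r f x| ≤ (μ (closedBall x r))⁻¹ *
      ((μ.withDensity (fun y => ENNReal.ofReal (max (|f y| - T) 0))) (closedBall x r))
      + ENNReal.ofReal T := by
  set B := closedBall x r with hB
  have hBmeas : MeasurableSet B := isClosed_closedBall.measurableSet
  obtain ⟨hB0, hBtop⟩ := hball x r hr
  have hg : Measurable (fun y => ENNReal.ofReal (max (|f y| - T) 0)) :=
    ((hf.abs.sub measurable_const).max measurable_const).ennreal_ofReal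
  have htR : (0:ℝ) < (μ B).toReal := ENNReal.toReal_pos hB0.ne' hBtop.ne
  -- step 1
  have h1 : ENNReal.ofReal |avgOp μ r f x|
      ≤ (μ B)⁻¹ * ∫⁻ y in B, ENNReal.ofReal |f y| ∂μ := by
    have habs : |avgOp μ r f x| = (μ B).toReal⁻¹ * |∫ y in B, f y ∂μ| := by
      rw [avgOp, abs_mul, abs_of_nonneg (by positivity)]
    rw [habs, ENNReal.ofReal_mul (by positivity)]
    have hinv : ENNReal.ofReal (μ B).toReal⁻¹ = (μ B)⁻¹ := by
      rw [ENNReal.ofReal_inv_of_pos htR, ENNReal.ofReal_toReal hBtop.ne]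
    rw [hinv]
    refine mul_le_mul_right ?_ _
    have := norm_integral_le_lintegral_norm (μ := μ.restrict B) f
    calc ENNReal.ofReal |∫ y in B, f y ∂μ|
        ≤ ENNReal.ofReal (∫⁻ y in B, ENNReal.ofReal ‖f y‖ ∂μ).toReal :=
          ENNReal.ofReal_le_ofReal (by rw [← Real.norm_eq_abs]; exact this)
      _ ≤ ∫⁻ y in B, ENNReal.ofReal ‖f y‖ ∂μ := ENNReal.ofReal_toReal_le
      _ = ∫⁻ y in B, ENNReal.ofReal |f y| ∂μ := by
          simp [Real.norm_eq_abs]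
  -- step 2 : split the integrand
  have h2 : ∫⁻ y in B, ENNReal.ofReal |f y| ∂μ
      = (∫⁻ y in B, ENNReal.ofReal (max (|f y| - T) 0) ∂μ)
        + ∫⁻ y in B, ENNReal.ofReal (min (|f y|) T) ∂μ := by
    rw [← lintegral_add_left hg]
    refine setLIntegral_congr_fun hBmeas (fun y _ => ?_)
    rw [← ENNReal.ofReal_add (le_max_right _ _) (le_min (abs_nonneg _) hT0)]
    congr 1
    rcases le_total (|f y|) T with h | h
    · rw [max_eq_right (by linarith), min_eq_left h, zero_add]
    · rw [max_eq_left (by linarith), min_eq_right h]; ring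
  -- step 3 : second piece bounded by T μ B
  have h3 : ∫⁻ y in B, ENNReal.ofReal (min (|f y|) T) ∂μ ≤ ENNReal.ofReal T * μ B := by
    calc ∫⁻ y in B, ENNReal.ofReal (min (|f y|) T) ∂μ
        ≤ ∫⁻ _ in B, ENNReal.ofReal T ∂μ :=
          setLIntegral_mono' hBmeas (fun y _ =>
            ENNReal.ofReal_le_ofReal (min_le_right _ _))
      _ = ENNReal.ofReal T * μ B := setLIntegral_const _ _
  calc ENNReal.ofReal |avgOp μ r f x|
      ≤ (μ B)⁻¹ * ((∫⁻ y in B, ENNReal.ofReal (max (|f y| - T) 0) ∂μ)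
          + ENNReal.ofReal T * μ B) := by
        refine le_trans h1 (mul_le_mul_right ?_ _)
        rw [h2]
        exact add_le_add_right h3 _
    _ = (μ B)⁻¹ * ((μ.withDensity (fun y => ENNReal.ofReal (max (|f y| - T) 0))) B)
        + ENNReal.ofReal T := by
        rw [mul_add, withDensity_apply _ hBmeas]
        congr 1
        rw [mul_comm (ENNReal.ofReal T), ← mul_assoc,
          ENNReal.inv_mul_cancel hB0.ne' hBtop.ne, one_mul]

lemma main_estimate {X : Type*} [MetricSpace X] [MeasurableSpace X] [BorelSpace X]
    (μ : Measure X)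
    (hball : ∀ (x : X) (s : ℝ), 0 < s → 0 < μ (closedBall x s) ∧ μ (closedBall x s) < ⊤)
    {r γ : ℝ} (hr : 0 < r) (hγ1 : 1 ≤ γ)
    (hγ : ∀ x : X, μ (closedBall x (2*r)) ≤ ENNReal.ofReal γ * μ (closedBall x r))
    {f : X → ℝ} (hf : Measurable f) {s : ℝ} (hs : 0 < s) :
    rearr μ (avgOp μ r f) s ≤ ENNReal.ofReal (1 + γ) * rearr2 μ f s := by
  have hγpos : (0:ℝ) < 1 + γ := by linarith
  have hone : (1:ℝ≥0∞) ≤ ENNReal.ofReal (1 + γ) := by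
    rw [← ENNReal.ofReal_one]; exact ENNReal.ofReal_le_ofReal (by linarith)
  have hF : rearr μ f s ≤ rearr2 μ f s := by
    rw [rearr2_eq_avg]; exact le_avg (rearr_antiOn μ f) hs
  set τ := rearr μ f s with hτdef
  by_cases hτ : τ = ⊤
  · have : rearr2 μ f s = ⊤ := top_le_iff.mp (hτ ▸ hF)
    rw [this, ENNReal.mul_top (by simp [hγpos])]
    exact le_top
  set T := τ.toReal with hT
  have hT0 : 0 ≤ T := ENNReal.toReal_nonneg
  have hτT : ENNReal.ofReal T = τ := ENNReal.ofReal_toReal hτ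
  set g' : X → ℝ≥0∞ := fun y => ENNReal.ofReal (max (|f y| - T) 0) with hg'
  set ν := μ.withDensity g' with hν
  have hg : Measurable g' := ((hf.abs.sub measurable_const).max measurable_const).ennreal_ofReal
  have hIuniv : ν Set.univ = ∫⁻ y, g' y ∂μ := by
    rw [hν, withDensity_apply _ MeasurableSet.univ, Measure.restrict_univ]
  set I := ν Set.univ with hI
  have hI_le : I ≤ ∫⁻ w in Set.Ioc (0:ℝ) s, rearr μ f w := by
    rw [hIuniv]; exact key_layercake μ hf hs hτ
  have hrearr2 : rearr2 μ f s = (ENNReal.ofReal s)⁻¹ * ∫⁻ w in Set.Ioc (0:ℝ) s, rearr μ f w := rfl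
  have hPW : ∀ x : X, ENNReal.ofReal |avgOp μ r f x|
      ≤ (μ (closedBall x r))⁻¹ * ν (closedBall x r) + τ := by
    intro x
    have := pointwise_bound μ hr hball hf hT0 x
    rwa [hτT] at this
  by_cases hI0 : I = 0
  · -- trivial case : g vanishes a.e.
    have hνzero : ∀ x : X, ν (closedBall x r) = 0 :=
      fun x => le_antisymm (hI0 ▸ measure_mono (Set.subset_univ _)) (zero_le)
    have hAbd : ∀ x : X, ENNReal.ofReal |avgOp μ r f x| ≤ τ := by
      intro x
      have := hPW x
      rwa [hνzero x, mul_zero, zero_add] at this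
    have : μ {x | τ < ENNReal.ofReal |avgOp μ r f x|} ≤ ENNReal.ofReal s := by
      have hempty : {x | τ < ENNReal.ofReal |avgOp μ r f x|} = ∅ := by
        ext x; simp only [Set.mem_setOf_eq, Set.mem_empty_iff_false, iff_false, not_lt]
        exact hAbd x
      rw [hempty]; simp
    calc rearr μ (avgOp μ r f) s ≤ τ := rearr_le_of_distrib_le μ this
      _ ≤ rearr2 μ f s := hF
      _ ≤ ENNReal.ofReal (1 + γ) * rearr2 μ f s := le_mul_of_one_le_left (zero_le) hone
  by_cases hItop : I = ⊤
  · -- infinite case : RHS is ⊤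
    have hJ : ∫⁻ w in Set.Ioc (0:ℝ) s, rearr μ f w = ⊤ := top_le_iff.mp (hItop ▸ hI_le)
    have : rearr2 μ f s = ⊤ := by
      rw [hrearr2, hJ, ENNReal.mul_top (by simp [hs])]
    rw [this, ENNReal.mul_top (by simp [hγpos])]
    exact le_top
  -- main case
  haveI : IsFiniteMeasure ν := ⟨lt_top_iff_ne_top.mpr hItop⟩
  have hs0 : ENNReal.ofReal s ≠ 0 := by simp [hs]
  have hγ0 : ENNReal.ofReal γ ≠ 0 := by simp; linarith
  set β := ENNReal.ofReal γ * I * (ENNReal.ofReal s)⁻¹ with hβ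
  have hβ0 : β ≠ 0 := by
    refine mul_ne_zero (mul_ne_zero hγ0 hI0) (ENNReal.inv_ne_zero.mpr ENNReal.ofReal_ne_top)
  have hβtop : β ≠ ⊤ :=
    ENNReal.mul_ne_top (ENNReal.mul_ne_top ENNReal.ofReal_ne_top hItop)
      (ENNReal.inv_ne_top.mpr hs0)
  have hcov := covering μ ν hr (fun x => hball x r hr) hγ hβ0 hβtop
  have hcovs : ENNReal.ofReal γ * β⁻¹ * ν Set.univ = ENNReal.ofReal s := by
    rw [hβ, ENNReal.mul_inv (Or.inl (mul_ne_zero hγ0 hI0))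
      (Or.inl (ENNReal.mul_ne_top ENNReal.ofReal_ne_top hItop)),
      inv_inv, ENNReal.mul_inv (Or.inl hγ0) (Or.inl ENNReal.ofReal_ne_top), ← hI]
    calc ENNReal.ofReal γ * ((ENNReal.ofReal γ)⁻¹ * I⁻¹ * ENNReal.ofReal s) * I
        = (ENNReal.ofReal γ * (ENNReal.ofReal γ)⁻¹) * (I⁻¹ * I) * ENNReal.ofReal s := by ring
      _ = ENNReal.ofReal s := by
          rw [ENNReal.mul_inv_cancel hγ0 ENNReal.ofReal_ne_top,
            ENNReal.inv_mul_cancel hI0 hItop, one_mul, one_mul]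
  rw [hcovs] at hcov
  have hdist : μ {x | τ + β < ENNReal.ofReal |avgOp μ r f x|} ≤ ENNReal.ofReal s := by
    refine le_trans (measure_mono ?_) hcov
    intro x hx
    have h1 : τ + β < (μ (closedBall x r))⁻¹ * ν (closedBall x r) + τ :=
      lt_of_lt_of_le hx (hPW x)
    rw [add_comm τ β] at h1
    exact (ENNReal.add_lt_add_iff_right hτ).mp h1
  have hfin : rearr μ (avgOp μ r f) s ≤ τ + β := rearr_le_of_distrib_le μ hdist
  have hβle : β ≤ ENNReal.ofReal γ * rearr2 μ f s := by
    rw [hβ, hrearr2]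
    calc ENNReal.ofReal γ * I * (ENNReal.ofReal s)⁻¹
        ≤ ENNReal.ofReal γ * (∫⁻ w in Set.Ioc (0:ℝ) s, rearr μ f w) * (ENNReal.ofReal s)⁻¹ :=
          mul_le_mul_left (mul_le_mul_right hI_le _) _
      _ = ENNReal.ofReal γ * ((ENNReal.ofReal s)⁻¹ * ∫⁻ w in Set.Ioc (0:ℝ) s, rearr μ f w) := by
          ring
  calc rearr μ (avgOp μ r f) s ≤ τ + β := hfin
    _ ≤ rearr2 μ f s + ENNReal.ofReal γ * rearr2 μ f s := add_le_add hF hβle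
    _ = ENNReal.ofReal (1 + γ) * rearr2 μ f s := by
        rw [ENNReal.ofReal_add (by norm_num) (by linarith), ENNReal.ofReal_one, add_mul, one_mul]

end S9
namespace S9
open ENNReal MeasureTheory

/-- The abstract Lorentz functional. -/
noncomputable def lnorm (p q : ℝ≥0∞) (h : ℝ → ℝ≥0∞) : ℝ≥0∞ :=
  if q = ⊤ then ⨆ t ∈ Set.Ioi (0 : ℝ), ENNReal.ofReal (t ^ (1 / p.toReal)) * h t
  else (∫⁻ t in Set.Ioi (0 : ℝ),
    ENNReal.ofReal (t ^ (q.toReal / p.toReal - 1)) * h t ^ q.toReal) ^ (1 / q.toReal)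

lemma lorentzNorm_eq {X : Type*} [MeasurableSpace X] (μ : MeasureTheory.Measure X)
    (f : X → ℝ) (p q : ℝ≥0∞) : lorentzNorm μ f p q = lnorm p q (rearr μ f) := rfl

lemma lorentzNorm'_eq {X : Type*} [MeasurableSpace X] (μ : MeasureTheory.Measure X)
    (f : X → ℝ) (p q : ℝ≥0∞) : lorentzNorm' μ f p q = lnorm p q (avg (rearr μ f)) := rfl

lemma lnorm_mono {p q : ℝ≥0∞} {h₁ h₂ : ℝ → ℝ≥0∞} (hle : ∀ t, 0 < t → h₁ t ≤ h₂ t) :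
    lnorm p q h₁ ≤ lnorm p q h₂ := by
  rw [lnorm, lnorm]
  split_ifs
  · exact iSup₂_le fun t ht => le_trans
      (mul_le_mul_right (hle t ht) _) (le_iSup₂ (f := fun t (_ : t ∈ Set.Ioi (0:ℝ)) =>
        ENNReal.ofReal (t ^ (1 / p.toReal)) * h₂ t) t ht)
  · refine ENNReal.rpow_le_rpow ?_ (by positivity)
    refine setLIntegral_mono' measurableSet_Ioi (fun t ht => ?_)
    exact mul_le_mul_right (ENNReal.rpow_le_rpow (hle t ht) ENNReal.toReal_nonneg) _

lemma lnorm_const_mul {p q : ℝ≥0∞} (hq : 1 ≤ q) (c : ℝ≥0∞) (hc : c ≠ ⊤) (h : ℝ → ℝ≥0∞) :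
    lnorm p q (fun t => c * h t) ≤ c * lnorm p q h := by
  rw [lnorm, lnorm]
  split_ifs with hqtop
  · refine iSup₂_le fun t ht => ?_
    rw [mul_left_comm]
    refine mul_le_mul_right ?_ c
    exact le_iSup₂ (f := fun t (_ : t ∈ Set.Ioi (0:ℝ)) =>
      ENNReal.ofReal (t ^ (1 / p.toReal)) * h t) t ht
  · have hQ0 : 0 < q.toReal := ENNReal.toReal_pos (by intro h0; rw [h0] at hq; simp at hq) hqtop
    have hcQ : c ^ q.toReal ≠ ⊤ := ENNReal.rpow_ne_top_of_nonneg hQ0.le hc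
    have e1 : ∫⁻ t in Set.Ioi (0:ℝ),
        ENNReal.ofReal (t ^ (q.toReal / p.toReal - 1)) * (c * h t) ^ q.toReal
        = c ^ q.toReal * ∫⁻ t in Set.Ioi (0:ℝ),
            ENNReal.ofReal (t ^ (q.toReal / p.toReal - 1)) * h t ^ q.toReal := by
      rw [← lintegral_const_mul' _ _ hcQ]
      refine lintegral_congr (fun t => ?_)
      rw [ENNReal.mul_rpow_of_nonneg _ _ hQ0.le, mul_left_comm]
    rw [e1, ENNReal.mul_rpow_of_nonneg _ _ (by positivity), ← ENNReal.rpow_mul,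
      mul_one_div_cancel hQ0.ne', ENNReal.rpow_one]

lemma iSup_rpow_nat {a : ℕ → ℝ≥0∞} {e : ℝ} (he : 0 < e) :
    (⨆ n, a n) ^ e = ⨆ n, a n ^ e := by
  refine Monotone.map_iSup_of_continuousAt (f := fun x : ℝ≥0∞ => x ^ e) ?_ ?_ ?_
  · exact ENNReal.continuous_rpow_const.continuousAt
  · exact fun x y hxy => ENNReal.rpow_le_rpow hxy he.le
  · simp [ENNReal.zero_rpow_of_pos he]

lemma lintegral_dilate {φ : ℝ → ℝ≥0∞} (hφ : Measurable φ) {lam : ℝ} (hlam : 0 < lam) :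
    ∫⁻ t in Set.Ioi (0:ℝ), φ (lam * t)
      = ENNReal.ofReal lam⁻¹ * ∫⁻ u in Set.Ioi (0:ℝ), φ u := by
  have hψ : Measurable ((Set.Ioi (0:ℝ)).indicator φ) := hφ.indicator measurableSet_Ioi
  have h1 : ∫⁻ t in Set.Ioi (0:ℝ), φ (lam * t)
      = ∫⁻ t, (Set.Ioi (0:ℝ)).indicator φ (lam * t) := by
    rw [← lintegral_indicator measurableSet_Ioi]
    refine lintegral_congr (fun t => ?_)
    by_cases ht : 0 < t
    · rw [Set.indicator_of_mem (Set.mem_Ioi.mpr ht),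
        Set.indicator_of_mem (Set.mem_Ioi.mpr (by positivity))]
    · rw [Set.indicator_of_notMem (fun hmem => ht (Set.mem_Ioi.mp hmem)),
        Set.indicator_of_notMem (fun hmem => ht ?_)]
      have := Set.mem_Ioi.mp hmem
      nlinarith [Set.mem_Ioi.mp hmem]
  rw [h1]
  have h2 : ∫⁻ t, (Set.Ioi (0:ℝ)).indicator φ (lam * t)
      = ∫⁻ y, (Set.Ioi (0:ℝ)).indicator φ y ∂(Measure.map (fun t => lam * t) volume) :=
    (lintegral_map hψ (measurable_const_mul lam)).symm
  rw [h2, Real.map_volume_mul_left hlam.ne', lintegral_smul_measure,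
    abs_of_pos (inv_pos.mpr hlam), lintegral_indicator measurableSet_Ioi, smul_eq_mul]

end S9
namespace S9
open ENNReal MeasureTheory

lemma lnorm_dilate {p q : ℝ≥0∞} (hq : 1 ≤ q) {lam : ℝ} (hlam : 0 < lam) {h : ℝ → ℝ≥0∞}
    (hh : Measurable h) :
    lnorm p q (fun t => h (lam * t))
      ≤ ENNReal.ofReal (lam ^ (-(1 / p.toReal))) * lnorm p q h := by
  set P := p.toReal with hP
  rw [lnorm, lnorm]
  split_ifs with hqtop
  · refine iSup₂_le fun t ht => ?_
    have ht0 : (0:ℝ) < t := ht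
    have key : ENNReal.ofReal (t ^ (1/P))
        = ENNReal.ofReal (lam ^ (-(1/P))) * ENNReal.ofReal ((lam*t) ^ (1/P)) := by
      rw [← ENNReal.ofReal_mul (by positivity), Real.mul_rpow hlam.le ht0.le, ← mul_assoc,
        ← Real.rpow_add hlam, neg_add_cancel, Real.rpow_zero, one_mul]
    rw [key, mul_assoc]
    refine mul_le_mul_right ?_ _
    exact le_iSup₂ (f := fun s (_ : s ∈ Set.Ioi (0:ℝ)) =>
      ENNReal.ofReal (s ^ (1 / P)) * h s) (lam * t) (Set.mem_Ioi.mpr (by positivity))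
  · set Q := q.toReal with hQ
    have hQ0 : 0 < Q := ENNReal.toReal_pos (by rintro rfl; simp at hq) hqtop
    set α := Q / P - 1 with hα
    set φ : ℝ → ℝ≥0∞ := fun u => ENNReal.ofReal (u ^ α) * h u ^ Q with hφ
    have hrpow : Measurable (fun u : ℝ => u ^ α) := by measurability
    have hφmeas : Measurable φ :=
      (hrpow.ennreal_ofReal).mul ((ENNReal.continuous_rpow_const.measurable).comp hh)
    have step_a : ∫⁻ t in Set.Ioi (0:ℝ), ENNReal.ofReal (t ^ α) * h (lam * t) ^ Q
        = ENNReal.ofReal (lam ^ (-α)) * ∫⁻ t in Set.Ioi (0:ℝ), φ (lam * t) := by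
      rw [← lintegral_const_mul' _ _ ENNReal.ofReal_ne_top]
      refine setLIntegral_congr_fun measurableSet_Ioi
        (fun t ht => ?_)
      have ht0 : (0:ℝ) < t := ht
      rw [hφ, ← mul_assoc, ← ENNReal.ofReal_mul (by positivity),
        Real.mul_rpow hlam.le ht0.le, ← mul_assoc, ← Real.rpow_add hlam,
        neg_add_cancel, Real.rpow_zero, one_mul]
    rw [step_a, lintegral_dilate hφmeas hlam, ← mul_assoc, ← ENNReal.ofReal_mul
      (by positivity), ← Real.rpow_neg_one lam, ← Real.rpow_add hlam,
      ENNReal.mul_rpow_of_nonneg _ _ (by positivity),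
      ← ENNReal.ofReal_rpow_of_pos (by positivity), ← ENNReal.rpow_mul]
    have hexp : (-α + -1) * (1/Q) = -(1/P) := by
      by_cases hP0 : P = 0
      · simp [hα, hP0]
      · rw [hα]
        field_simp
        ring
    rw [hexp, ENNReal.ofReal_rpow_of_pos hlam]

lemma lnorm_tsum_le {p q : ℝ≥0∞} (hq : 1 ≤ q) {u : ℕ → ℝ → ℝ≥0∞}
    (hu : ∀ k, Measurable (u k)) :
    lnorm p q (fun t => ∑' k, u k t) ≤ ∑' k, lnorm p q (u k) := by
  rw [lnorm]
  split_ifs with hqtop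
  · refine iSup₂_le fun t ht => ?_
    rw [← ENNReal.tsum_mul_left]
    refine ENNReal.tsum_le_tsum (fun k => ?_)
    calc ENNReal.ofReal (t ^ (1 / p.toReal)) * u k t
        ≤ ⨆ s ∈ Set.Ioi (0:ℝ), ENNReal.ofReal (s ^ (1 / p.toReal)) * u k s :=
          le_iSup₂ (f := fun s (_ : s ∈ Set.Ioi (0:ℝ)) =>
            ENNReal.ofReal (s ^ (1 / p.toReal)) * u k s) t ht
      _ = lnorm p q (u k) := by rw [lnorm, if_pos hqtop]
  · set Q := q.toReal with hQdef
    have hQ0 : 0 < Q := ENNReal.toReal_pos (by rintro rfl; simp at hq) hqtop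
    have hQ1 : 1 ≤ Q := by
      have := ENNReal.toReal_mono hqtop hq
      simpa using this
    set w : ℝ → ℝ≥0∞ := fun t => ENNReal.ofReal (t ^ (Q / p.toReal - 1)) with hw
    have hwr : Measurable (fun t : ℝ => t ^ (Q / p.toReal - 1)) := by measurability
    have hwmeas : Measurable w := hwr.ennreal_ofReal
    set v : ℕ → ℝ → ℝ≥0∞ := fun k t => w t ^ (1/Q) * u k t with hv
    have hvmeas : ∀ k, Measurable (v k) :=
      fun k => ((ENNReal.continuous_rpow_const.measurable).comp hwmeas).mul (hu k)
    have claim0 : ∀ (g : ℝ → ℝ≥0∞) (t : ℝ), w t * g t ^ Q = (w t ^ (1/Q) * g t) ^ Q := by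
      intro g t
      rw [ENNReal.mul_rpow_of_nonneg _ _ hQ0.le, ← ENNReal.rpow_mul,
        one_div_mul_cancel hQ0.ne', ENNReal.rpow_one]
    -- finite Minkowski
    have hpartmeas : ∀ n, Measurable (fun t => ∑ k ∈ Finset.range n, v k t) :=
      fun n => Finset.measurable_sum _ (fun k _ => hvmeas k)
    have hmink : ∀ n : ℕ,
        (∫⁻ t in Set.Ioi (0:ℝ), (∑ k ∈ Finset.range n, v k t) ^ Q) ^ (1/Q)
          ≤ ∑ k ∈ Finset.range n, (∫⁻ t in Set.Ioi (0:ℝ), v k t ^ Q) ^ (1/Q) := by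
      intro n
      induction n with
      | zero => simp [ENNReal.zero_rpow_of_pos hQ0, hQ0]
      | succ n ih =>
        have he : (fun t => (∑ k ∈ Finset.range (n+1), v k t) ^ Q)
            = fun t => (((fun t => ∑ k ∈ Finset.range n, v k t) + v n) t) ^ Q := by
          funext t; simp [Finset.sum_range_succ]
        calc (∫⁻ t in Set.Ioi (0:ℝ), (∑ k ∈ Finset.range (n+1), v k t) ^ Q) ^ (1/Q)
            = (∫⁻ t in Set.Ioi (0:ℝ),
                (((fun t => ∑ k ∈ Finset.range n, v k t) + v n) t) ^ Q) ^ (1/Q) := by rw [he]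
          _ ≤ (∫⁻ t in Set.Ioi (0:ℝ), (∑ k ∈ Finset.range n, v k t) ^ Q) ^ (1/Q)
              + (∫⁻ t in Set.Ioi (0:ℝ), v n t ^ Q) ^ (1/Q) :=
              ENNReal.lintegral_Lp_add_le (hpartmeas n).aemeasurable
                (hvmeas n).aemeasurable hQ1
          _ ≤ ∑ k ∈ Finset.range (n+1), (∫⁻ t in Set.Ioi (0:ℝ), v k t ^ Q) ^ (1/Q) := by
              rw [Finset.sum_range_succ]
              exact add_le_add ih le_rfl
    have hlnorm_eq : ∀ k, lnorm p q (u k) = (∫⁻ t in Set.Ioi (0:ℝ), v k t ^ Q) ^ (1/Q) := by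
      intro k
      rw [lnorm, if_neg hqtop]
      congr 1
      exact lintegral_congr fun t => claim0 (u k) t
    calc (∫⁻ t in Set.Ioi (0:ℝ), w t * (∑' k, u k t) ^ Q) ^ (1/Q)
        = (∫⁻ t in Set.Ioi (0:ℝ), ⨆ n, (∑ k ∈ Finset.range n, v k t) ^ Q) ^ (1/Q) := by
          congr 1
          refine lintegral_congr fun t => ?_
          rw [claim0 (fun t => ∑' k, u k t) t, ← ENNReal.tsum_mul_left,
            ENNReal.tsum_eq_iSup_nat, iSup_rpow_nat hQ0]
        _ = (⨆ n, ∫⁻ t in Set.Ioi (0:ℝ), (∑ k ∈ Finset.range n, v k t) ^ Q) ^ (1/Q) := by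
          congr 1
          refine lintegral_iSup
            (fun n => (ENNReal.continuous_rpow_const.measurable).comp (hpartmeas n)) ?_
          intro n m hnm t
          refine ENNReal.rpow_le_rpow ?_ hQ0.le
          exact Finset.sum_le_sum_of_subset (Finset.range_subset_range.mpr hnm)
        _ = ⨆ n, (∫⁻ t in Set.Ioi (0:ℝ), (∑ k ∈ Finset.range n, v k t) ^ Q) ^ (1/Q) :=
          iSup_rpow_nat (by positivity)
        _ ≤ ∑' k, lnorm p q (u k) := by
          refine iSup_le fun n => ?_
          refine le_trans (hmink n) ?_
          rw [show ∑ k ∈ Finset.range n, (∫⁻ t in Set.Ioi (0:ℝ), v k t ^ Q) ^ (1/Q)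
            = ∑ k ∈ Finset.range n, lnorm p q (u k) from
            Finset.sum_congr rfl (fun k _ => (hlnorm_eq k).symm)]
          exact ENNReal.sum_le_tsum _

end S9
namespace S9
open ENNReal MeasureTheory

noncomputable def hardyC (p : ℝ≥0∞) : ℝ≥0∞ :=
  ∑' k : ℕ, ENNReal.ofReal (((2:ℝ)^(k+1))⁻¹)
    * ENNReal.ofReal ((((2:ℝ)^(k+1))⁻¹) ^ (-(1 / p.toReal)))

lemma avg_le_tsum {h : ℝ → ℝ≥0∞} (hh : AntiOn h) {t : ℝ} (ht : 0 < t) :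
    avg h t ≤ ∑' k : ℕ, ENNReal.ofReal (((2:ℝ)^(k+1))⁻¹) * h (((2:ℝ)^(k+1))⁻¹ * t) := by
  have h0 : ENNReal.ofReal t ≠ 0 := by simp [ht]
  have htop : ENNReal.ofReal t ≠ ⊤ := ENNReal.ofReal_ne_top
  set S : ℕ → Set ℝ := fun k => Set.Ioc (t / 2^(k+1)) (t / 2^k) with hS
  have hcover : Set.Ioc (0:ℝ) t = ⋃ k, S k := by
    ext u
    simp only [Set.mem_Ioc, Set.mem_iUnion]
    constructor
    · rintro ⟨hu0, hut⟩
      have hex : ∃ n : ℕ, t / 2^(n+1) < u := by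
        obtain ⟨n, hn⟩ := pow_unbounded_of_one_lt (t / u) (one_lt_two (α := ℝ))
        refine ⟨n, ?_⟩
        rw [div_lt_iff₀ (by positivity)]
        rw [div_lt_iff₀ hu0] at hn
        calc t < 2^n * u := hn
          _ ≤ 2^(n+1) * u := by
              have : (2:ℝ)^n ≤ 2^(n+1) := by
                apply pow_le_pow_right₀ one_le_two (Nat.le_succ n)
              nlinarith
          _ = u * 2^(n+1) := mul_comm _ _
      refine ⟨Nat.find hex, Nat.find_spec hex, ?_⟩
      rcases Nat.eq_zero_or_pos (Nat.find hex) with hzero | hpos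
      · rw [hzero]; simpa using hut
      · have hmin := Nat.find_min hex (show Nat.find hex - 1 < Nat.find hex by omega)
        push_neg at hmin
        have : u ≤ t / 2 ^ (Nat.find hex - 1 + 1) := hmin
        rwa [Nat.sub_add_cancel hpos] at this
    · rintro ⟨k, hk1, hk2⟩
      refine ⟨lt_trans (by positivity) hk1, le_trans hk2 ?_⟩
      apply div_le_self ht.le
      exact one_le_pow₀ one_le_two
  have hdisj : Pairwise (Function.onFun Disjoint S) := by
    have haux : ∀ i j : ℕ, i < j → Disjoint (S i) (S j) := by
      intro i j hij
      rw [hS]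
      simp only
      rw [Set.Ioc_disjoint_Ioc]
      refine le_trans (min_le_right _ _) (le_trans ?_ (le_max_left _ _))
      apply div_le_div_of_nonneg_left ht.le (by positivity)
      exact pow_le_pow_right₀ one_le_two hij
    intro i j hij
    rcases lt_or_gt_of_ne hij with hlt | hgt
    · exact haux i j hlt
    · exact (haux j i hgt).symm
  have hpiece : ∀ k : ℕ, ∫⁻ s in S k, h s
      ≤ h (t / 2^(k+1)) * ENNReal.ofReal (t / 2^(k+1)) := by
    intro k
    calc ∫⁻ s in S k, h s ≤ ∫⁻ _ in S k, h (t / 2^(k+1)) :=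
          setLIntegral_mono' measurableSet_Ioc (fun x hx => hh (by positivity) hx.1.le)
      _ = h (t / 2^(k+1)) * volume (S k) := setLIntegral_const _ _
      _ = h (t / 2^(k+1)) * ENNReal.ofReal (t / 2^(k+1)) := by
          rw [hS]
          simp only
          rw [Real.volume_Ioc]
          congr 2
          field_simp
          ring
  calc avg h t = (ENNReal.ofReal t)⁻¹ * ∫⁻ s in ⋃ k, S k, h s := by rw [avg, hcover]
    _ = (ENNReal.ofReal t)⁻¹ * ∑' k, ∫⁻ s in S k, h s := by
        rw [lintegral_iUnion (fun k => measurableSet_Ioc) hdisj]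
    _ ≤ (ENNReal.ofReal t)⁻¹ * ∑' k, h (t / 2^(k+1)) * ENNReal.ofReal (t / 2^(k+1)) :=
        mul_le_mul_right (ENNReal.tsum_le_tsum hpiece) _
    _ = ∑' k : ℕ, ENNReal.ofReal (((2:ℝ)^(k+1))⁻¹) * h (((2:ℝ)^(k+1))⁻¹ * t) := by
        rw [← ENNReal.tsum_mul_left]
        refine tsum_congr fun k => ?_
        have harg : t / 2^(k+1) = ((2:ℝ)^(k+1))⁻¹ * t := by
          rw [inv_mul_eq_div]
        rw [harg, ENNReal.ofReal_mul (show (0:ℝ) ≤ ((2:ℝ)^(k+1))⁻¹ by positivity)]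
        calc (ENNReal.ofReal t)⁻¹ * (h (((2:ℝ)^(k+1))⁻¹ * t) *
              (ENNReal.ofReal (((2:ℝ)^(k+1))⁻¹) * ENNReal.ofReal t))
            = (ENNReal.ofReal (((2:ℝ)^(k+1))⁻¹) * h (((2:ℝ)^(k+1))⁻¹ * t))
              * ((ENNReal.ofReal t)⁻¹ * ENNReal.ofReal t) := by ring
          _ = ENNReal.ofReal (((2:ℝ)^(k+1))⁻¹) * h (((2:ℝ)^(k+1))⁻¹ * t) := by
              rw [ENNReal.inv_mul_cancel h0 htop, mul_one]

lemma lnorm_avg_le {p q : ℝ≥0∞} (hq : 1 ≤ q) {h : ℝ → ℝ≥0∞}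
    (hh : Measurable h) (hanti : AntiOn h) :
    lnorm p q (avg h) ≤ hardyC p * lnorm p q h := by
  set u : ℕ → ℝ → ℝ≥0∞ :=
    fun k t => ENNReal.ofReal (((2:ℝ)^(k+1))⁻¹) * h (((2:ℝ)^(k+1))⁻¹ * t) with hu
  have humeas : ∀ k, Measurable (u k) :=
    fun k => measurable_const.mul (hh.comp (measurable_const_mul _))
  calc lnorm p q (avg h) ≤ lnorm p q (fun t => ∑' k, u k t) :=
      lnorm_mono (fun t ht => avg_le_tsum hanti ht)
    _ ≤ ∑' k, lnorm p q (u k) := lnorm_tsum_le hq humeas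
    _ ≤ ∑' k : ℕ, ENNReal.ofReal (((2:ℝ)^(k+1))⁻¹)
        * (ENNReal.ofReal ((((2:ℝ)^(k+1))⁻¹) ^ (-(1/p.toReal))) * lnorm p q h) := by
        refine ENNReal.tsum_le_tsum fun k => ?_
        refine le_trans (lnorm_const_mul hq _ ENNReal.ofReal_ne_top _) ?_
        exact mul_le_mul_right (lnorm_dilate hq (by positivity) hh) _
    _ = hardyC p * lnorm p q h := by
        rw [hardyC, ← ENNReal.tsum_mul_right]
        exact tsum_congr fun k => by ring

lemma hardyC_lt_top {p : ℝ≥0∞} (hp : 1 < p) : hardyC p < ⊤ := by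
  set δ := 1 / p.toReal with hδdef
  have hδ0 : 0 ≤ δ := by positivity
  have hδ1 : δ < 1 := by
    rcases eq_or_ne p ⊤ with hptop | hptop
    · simp [hδdef, hptop]
    · have hP : 1 < p.toReal := by
        have := ENNReal.toReal_mono hptop hp.le
        simp only [ENNReal.toReal_one] at this
        rcases lt_or_eq_of_le this with h | h
        · exact h
        · exfalso
          have : p = 1 := by
            apply ENNReal.toReal_eq_one_iff p |>.mp h.symm
          rw [this] at hp; exact lt_irrefl _ hp
      rw [hδdef, div_lt_one (by linarith)]
      linarith
  set ρ := (2:ℝ) ^ (δ - 1) with hρ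
  have hρpos : 0 < ρ := Real.rpow_pos_of_pos (by norm_num) _
  have hρ1 : ρ < 1 := Real.rpow_lt_one_of_one_lt_of_neg (by norm_num) (by linarith)
  have hterm : ∀ k : ℕ, ENNReal.ofReal (((2:ℝ)^(k+1))⁻¹)
      * ENNReal.ofReal ((((2:ℝ)^(k+1))⁻¹) ^ (-δ)) = (ENNReal.ofReal ρ)^(k+1) := by
    intro k
    have h2 : ((2:ℝ)^(k+1))⁻¹ = (2:ℝ) ^ (-((k+1:ℕ):ℝ)) := by
      rw [Real.rpow_neg (by norm_num), Real.rpow_natCast]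
    rw [h2, ← ENNReal.ofReal_mul (by positivity), ← Real.rpow_mul (by norm_num),
      ← Real.rpow_add (by norm_num), ← ENNReal.ofReal_pow hρpos.le]
    congr 1
    rw [hρ, ← Real.rpow_natCast ((2:ℝ) ^ (δ-1)) (k+1), ← Real.rpow_mul (by norm_num)]
    congr 1
    push_cast
    ring
  have hsum : hardyC p = (ENNReal.ofReal ρ) * (1 - ENNReal.ofReal ρ)⁻¹ := by
    rw [hardyC]
    calc ∑' k : ℕ, ENNReal.ofReal (((2:ℝ)^(k+1))⁻¹)
          * ENNReal.ofReal ((((2:ℝ)^(k+1))⁻¹) ^ (-δ))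
        = ∑' k : ℕ, (ENNReal.ofReal ρ)^(k+1) := tsum_congr hterm
      _ = ENNReal.ofReal ρ * ∑' k : ℕ, (ENNReal.ofReal ρ)^k := by
          rw [← ENNReal.tsum_mul_left]
          exact tsum_congr fun k => by rw [pow_succ, mul_comm]
      _ = ENNReal.ofReal ρ * (1 - ENNReal.ofReal ρ)⁻¹ := by rw [ENNReal.tsum_geometric]
  rw [hsum, lt_top_iff_ne_top]
  refine ENNReal.mul_ne_top ENNReal.ofReal_ne_top ?_
  rw [Ne, ENNReal.inv_eq_top, tsub_eq_zero_iff_le]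
  exact fun hle => absurd (lt_of_le_of_lt hle (ENNReal.ofReal_lt_one.mpr hρ1)) (lt_irrefl _)

end S9
namespace S9
open ENNReal MeasureTheory

lemma avg_le_avg {h₁ h₂ : ℝ → ℝ≥0∞} (hle : ∀ s, 0 < s → h₁ s ≤ h₂ s) (t : ℝ) :
    avg h₁ t ≤ avg h₂ t :=
  mul_le_mul_right (setLIntegral_mono' measurableSet_Ioc (fun s hs => hle s hs.1)) _

lemma avg_const_mul (c : ℝ≥0∞) (hc : c ≠ ⊤) (h : ℝ → ℝ≥0∞) (t : ℝ) :
    avg (fun s => c * h s) t = c * avg h t := by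
  rw [avg, avg, lintegral_const_mul' _ _ hc, mul_left_comm]

lemma avg_measurable (h : ℝ → ℝ≥0∞) : Measurable (avg h) := by
  refine Measurable.mul ?_ ?_
  · exact ENNReal.measurable_ofReal.inv
  · refine Monotone.measurable (fun t₁ t₂ h12 => ?_)
    exact lintegral_mono_set (Set.Ioc_subset_Ioc_right h12)

end S9

open scoped ENNReal in
theorem statement_9' {X : Type*} [MetricSpace X] [MeasurableSpace X] [BorelSpace X]
    (μ : Measure X)
    (hball : ∀ (x : X) (s : ℝ), 0 < s → 0 < μ (closedBall x s) ∧ μ (closedBall x s) < ⊤)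
    (r : ℝ) (hr : 0 < r)
    (hdbl : ∀ s : ℝ, r ≤ s → DoublingAt μ s)
    (hvitali : VitaliCoveringProperty X μ)
    (p q : ENNReal) (hp : 1 < p) (hq : 1 ≤ q) :
    ∃ c : ℝ, 2 ≤ c ∧ ∀ f : X → ℝ, Measurable f → lorentzNorm μ f p q < ⊤ →
      lorentzNorm μ (avgOp μ r f) p q ≤
        ENNReal.ofReal c * (if p = ⊤ then 1 else p / (p - 1)) * lorentzNorm μ f p q ∧
      lorentzNorm' μ (avgOp μ r f) p q ≤
        ENNReal.ofReal c * (if p = ⊤ then 1 else p / (p - 1)) * lorentzNorm' μ f p q ∧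
      lorentzNorm μ (avgOp μ r f) p q < ⊤ := by
  classical
  obtain ⟨γ, hγ1, hγx⟩ := hdbl r le_rfl
  have hCH : S9.hardyC p < ⊤ := S9.hardyC_lt_top hp
  set c : ℝ := max 2 ((1 + γ) * (S9.hardyC p).toReal) with hc
  have hc2 : 2 ≤ c := le_max_left _ _
  have hconst : ENNReal.ofReal (1 + γ) * S9.hardyC p ≤ ENNReal.ofReal c := by
    rw [← ENNReal.ofReal_toReal hCH.ne, ← ENNReal.ofReal_mul (by linarith)]
    exact ENNReal.ofReal_le_ofReal (le_max_right _ _)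
  -- κ ≥ 1
  have hκ : (1:ℝ≥0∞) ≤ (if p = ⊤ then 1 else p / (p - 1)) := by
    split_ifs with hptop
    · exact le_refl _
    · have h10 : p - 1 ≠ 0 := (tsub_pos_of_lt hp).ne'
      have h1top : p - 1 ≠ ⊤ := by
        simp [ENNReal.sub_ne_top, hptop]
      rw [ENNReal.le_div_iff_mul_le (Or.inl h10) (Or.inl h1top), one_mul]
      exact tsub_le_self
  refine ⟨c, hc2, fun f hf hfin => ?_⟩
  set Af := avgOp μ r f with hAf
  have hme : ∀ t : ℝ, 0 < t →
      rearr μ Af t ≤ ENNReal.ofReal (1 + γ) * S9.avg (rearr μ f) t := by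
    intro t ht
    have := S9.main_estimate μ hball hr hγ1 hγx hf ht
    rwa [S9.rearr2_eq_avg] at this
  -- bound for the first (unstarred) norm
  have bound1 : lorentzNorm μ Af p q
      ≤ ENNReal.ofReal (1 + γ) * (S9.hardyC p * lorentzNorm μ f p q) := by
    rw [S9.lorentzNorm_eq, S9.lorentzNorm_eq]
    calc S9.lnorm p q (rearr μ Af)
        ≤ S9.lnorm p q (fun t => ENNReal.ofReal (1 + γ) * S9.avg (rearr μ f) t) :=
          S9.lnorm_mono hme
      _ ≤ ENNReal.ofReal (1 + γ) * S9.lnorm p q (S9.avg (rearr μ f)) :=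
          S9.lnorm_const_mul hq _ ENNReal.ofReal_ne_top _
      _ ≤ ENNReal.ofReal (1 + γ) * (S9.hardyC p * S9.lnorm p q (rearr μ f)) :=
          mul_le_mul_right (S9.lnorm_avg_le hq (S9.rearr_measurable μ f)
            (S9.rearr_antiOn μ f)) _
  -- bound for the second (starred) norm
  have bound2 : lorentzNorm' μ Af p q
      ≤ ENNReal.ofReal (1 + γ) * (S9.hardyC p * lorentzNorm' μ f p q) := by
    rw [S9.lorentzNorm'_eq, S9.lorentzNorm'_eq]
    calc S9.lnorm p q (S9.avg (rearr μ Af))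
        ≤ S9.lnorm p q (S9.avg (fun s => ENNReal.ofReal (1 + γ) * S9.avg (rearr μ f) s)) :=
          S9.lnorm_mono (fun t _ => S9.avg_le_avg hme t)
      _ = S9.lnorm p q (fun t => ENNReal.ofReal (1 + γ) * S9.avg (S9.avg (rearr μ f)) t) := by
          congr 1
          funext t
          rw [S9.avg_const_mul _ ENNReal.ofReal_ne_top]
      _ ≤ ENNReal.ofReal (1 + γ) * S9.lnorm p q (S9.avg (S9.avg (rearr μ f))) :=
          S9.lnorm_const_mul hq _ ENNReal.ofReal_ne_top _
      _ ≤ ENNReal.ofReal (1 + γ) * (S9.hardyC p * S9.lnorm p q (S9.avg (rearr μ f))) :=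
          mul_le_mul_right (S9.lnorm_avg_le hq (S9.avg_measurable (rearr μ f))
            (S9.avg_antiOn (S9.rearr_antiOn μ f))) _
  have habs : ∀ L L' : ℝ≥0∞, L ≤ ENNReal.ofReal (1 + γ) * (S9.hardyC p * L') →
      L ≤ ENNReal.ofReal c * (if p = ⊤ then 1 else p / (p - 1)) * L' := by
    intro L L' hL
    calc L ≤ ENNReal.ofReal (1 + γ) * (S9.hardyC p * L') := hL
      _ = (ENNReal.ofReal (1 + γ) * S9.hardyC p) * L' := by rw [mul_assoc]
      _ ≤ ENNReal.ofReal c * L' := mul_le_mul_left hconst _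
      _ ≤ ENNReal.ofReal c * (if p = ⊤ then 1 else p / (p - 1)) * L' :=
          mul_le_mul_left (le_mul_of_one_le_right (zero_le) hκ) _
  refine ⟨habs _ _ bound1, habs _ _ bound2, ?_⟩
  refine lt_of_le_of_lt bound1 ?_
  refine ENNReal.mul_lt_top ENNReal.ofReal_lt_top (ENNReal.mul_lt_top hCH hfin)

/-- If `X` is `s`-doubling and has the Vitali covering property for all
`s ≥ r`, and `1 < p ≤ ∞`, `1 ≤ q ≤ ∞`, there is `c ≥ 2` such that for every
`f ∈ L^{p,q}(X)`, `‖A_r f‖_{p,q} ≤ (cp/(p−1)) ‖f‖_{p,q}` and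
`‖A_r f‖_{(p,q)} ≤ (cp/(p−1)) ‖f‖_{(p,q)}` (with `p/(p−1)` read as `1` for `p = ∞`);
in particular `A_r` maps `L^{p,q}(X)` into itself. -/
theorem statement_9 {X : Type*} [MetricSpace X] [MeasurableSpace X] [BorelSpace X]
    (μ : Measure X)
    (hball : ∀ (x : X) (s : ℝ), 0 < s → 0 < μ (closedBall x s) ∧ μ (closedBall x s) < ⊤)
    (r : ℝ) (hr : 0 < r)
    (hdbl : ∀ s : ℝ, r ≤ s → DoublingAt μ s)
    (hvitali : VitaliCoveringProperty X μ)
    (p q : ENNReal) (hp : 1 < p) (hq : 1 ≤ q) :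
    ∃ c : ℝ, 2 ≤ c ∧ ∀ f : X → ℝ, Measurable f → lorentzNorm μ f p q < ⊤ →
      lorentzNorm μ (avgOp μ r f) p q ≤
        ENNReal.ofReal c * (if p = ⊤ then 1 else p / (p - 1)) * lorentzNorm μ f p q ∧
      lorentzNorm' μ (avgOp μ r f) p q ≤
        ENNReal.ofReal c * (if p = ⊤ then 1 else p / (p - 1)) * lorentzNorm' μ f p q ∧
      lorentzNorm μ (avgOp μ r f) p q < ⊤ := by
  exact statement_9' μ hball r hr hdbl hvitali p q hp hq
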